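/- Let w̲ be a reduced expression for w ∈ W and x ≤ w. Then the ℝ-linear map f : Δ_{w̲}(x) → Hom^ℤ(BS(w̲), R_x) ⊗_R ℝ determined by l ↦ (β_x ∘ l) ⊗ 1 for l ∈ L_{w̲}(x) is an isomorphism of graded right A-modules, where A = End^ℤ(BS(w̲)) ⊗_R ℝ acts on Hom^ℤ(BS(w̲), R_x) ⊗_R ℝ by composition: (g ⊗ 1)(a ⊗ 1) = (g ∘ a) ⊗ 1. -/

import Mathlib

open CoxeterSystem

variable {B : Type*} {W : Type*} [Group W] {M : CoxeterMatrix B}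

/-- The Bruhat order on a Coxeter group: `x ≤ y` iff there is a chain from `x` to `y`
each step of which multiplies on the right by a reflection and strictly increases length. -/
def bruhatLE (cs : CoxeterSystem M W) (x y : W) : Prop :=
  Relation.ReflTransGen
    (fun a b => (∃ t : W, cs.IsReflection t ∧ b = a * t) ∧ cs.length a < cs.length b) x y

/-- The strict Bruhat order. -/
def bruhatLT (cs : CoxeterSystem M W) (x y : W) : Prop :=
  Relation.TransGen
    (fun a b => (∃ t : W, cs.IsReflection t ∧ b = a * t) ∧ cs.length a < cs.length b) x y

/-- The subword of `ω` selected by a list of Booleans. -/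
def selectedWord : List B → List Bool → List B
  | s :: l, true :: e => s :: selectedWord l e
  | _ :: l, false :: e => selectedWord l e
  | _, _ => []

/-- The element of `W` obtained by multiplying the letters of `ω` selected by `e`. -/
def subwordProd (cs : CoxeterSystem M W) (ω : List B) (e : List Bool) : W :=
  cs.wordProd (selectedWord ω e)

/-- Light leaves of the Bott–Samelson bimodule `BS(ω)` with target `u` are indexed by
the 01-sequences (subexpressions) of `ω` whose selected subword multiplies to `u`. -/
def CLeaf (cs : CoxeterSystem M W) (ω : List B) (u : W) : Type _ :=
  {e : Fin ω.length → Bool // subwordProd cs ω (List.ofFn e) = u}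

instance (cs : CoxeterSystem M W) (ω : List B) (u : W) [DecidableEq W] :
    Fintype (CLeaf cs ω u) := by
  unfold CLeaf; infer_instance

/-- Number of morphisms of type `m_s` used in the construction of the light leaf indexed
by `e` (with partial product accumulated in the first argument). -/
noncomputable def nmAux (cs : CoxeterSystem M W) : W → List B → List Bool → ℕ
  | x, s :: l, b :: e =>
      (if cs.length (x * cs.simple s) = cs.length x + 1
        then (if b then 0 else 1) else (if b then 1 else 0))
      + nmAux cs (if b then x * cs.simple s else x) l e
  | _, _, _ => 0

/-- Number of morphisms of type `j_s` used in the construction of the light leaf indexed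
by `e`. -/
noncomputable def njAux (cs : CoxeterSystem M W) : W → List B → List Bool → ℕ
  | x, s :: l, b :: e =>
      (if cs.length (x * cs.simple s) = cs.length x + 1 then 0 else 1)
      + njAux cs (if b then x * cs.simple s else x) l e
  | _, _, _ => 0

/-- `n_m(l)` for a light leaf `l ∈ L_ω(u)`. -/
noncomputable def leafNm (cs : CoxeterSystem M W) (ω : List B) {u : W} (l : CLeaf cs ω u) : ℕ :=
  nmAux cs 1 ω (List.ofFn l.1)

/-- `n_j(l)` for a light leaf `l ∈ L_ω(u)`. -/
noncomputable def leafNj (cs : CoxeterSystem M W) (ω : List B) {u : W} (l : CLeaf cs ω u) : ℕ :=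
  njAux cs 1 ω (List.ofFn l.1)

/-- The degree of the light leaf indexed by `e`: `deg l = n_m(l) - n_j(l)`. -/
noncomputable def leafDeg (cs : CoxeterSystem M W) (ω : List B) {u : W} (l : CLeaf cs ω u) : ℤ :=
  (leafNm cs ω l : ℤ) - (leafNj cs ω l : ℤ)


open CategoryTheory

/-- An abstract environment for the category of Soergel bimodules of a Coxeter system
`(W,S)` over the polynomial ring `R`: a preadditive `R`-linear category containing the
Bott–Samelson bimodules `BS(ω)` and the standard bimodules `R_x`, together with a fixed
reduced expression `ρ(u)` for every `u ∈ W`, Libedinsky's light leaves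
`L_ω(u) = {leafMor l : BS(ω) ⟶ BS(ρ u)}` (indexed by the subexpressions `CLeaf cs ω u`),
their adjoint leaves, the morphisms `β_x : BS(x̲) ⟶ R_x`, and the facts that double
leaves form an `R`-basis of `Hom(BS(ω), BS(ψ))` and standard leaves form an `R`-basis of
`Hom(BS(ω), R_x)`. -/
structure SoergelHomData {B : Type*} {W : Type*} [Group W] {M : CoxeterMatrix B}
    (cs : CoxeterSystem M W) (R : Type*) [CommRing R] where
  /-- ambient category (of graded `(R,R)`-bimodules) -/
  C : Type*
  [cat : Category.{v} C]
  [preadd : Preadditive C]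
  [lin : CategoryTheory.Linear R C]
  /-- the Bott–Samelson bimodules -/
  BS : List B → C
  /-- the standard bimodules `R_x` -/
  Rstd : W → C
  /-- a fixed choice of reduced expression for each element of `W` -/
  rho : W → List B
  rho_prod : ∀ w, cs.wordProd (rho w) = w
  rho_reduced : ∀ w, cs.IsReduced (rho w)
  /-- the light leaf morphisms: `L_ω(u)` consists of the `leafMor ω u l` -/
  leafMor : ∀ (ω : List B) (u : W), CLeaf cs ω u → (BS ω ⟶ BS (rho u))
  /-- the adjoint leaves `l^a` -/
  adj : ∀ (ω : List B) (u : W), CLeaf cs ω u → (BS (rho u) ⟶ BS ω)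
  /-- the bimodule morphisms `β_x : BS(x̲) ⟶ R_x` -/
  beta : ∀ x : W, (BS (rho x) ⟶ Rstd x)
  /-- Libedinsky's double leaves theorem: the double leaves `l₂^a ∘ l₁` form an
  `R`-basis of `Hom^ℤ(BS(ω), BS(ψ))`. -/
  dl_basis : ∀ ω ψ : List B,
      ∃ b : Module.Basis (Σ u : W, CLeaf cs ω u × CLeaf cs ψ u) R (BS ω ⟶ BS ψ),
        ∀ p, b p = leafMor ω p.1 p.2.1 ≫ adj ψ p.1 p.2.2
  /-- Libedinsky's standard leaves theorem: the standard leaves `β_x ∘ l` form an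
  `R`-basis of `Hom^ℤ(BS(ω), R_x)`. -/
  std_basis : ∀ (ω : List B) (x : W),
      ∃ b : Module.Basis (CLeaf cs ω x) R (BS ω ⟶ Rstd x),
        ∀ l, b l = leafMor ω x l ≫ beta x

attribute [instance] SoergelHomData.cat SoergelHomData.preadd SoergelHomData.lin

variable {R : Type*} [CommRing R]

/-- `DL_{<x}`: the span of the double leaves `BS(ω) ⟶ BS(ψ)` factoring through some
`u < x` in the Bruhat order. -/
noncomputable def DLlt {cs : CoxeterSystem M W} (D : SoergelHomData cs R)
    (ω ψ : List B) (x : W) : Submodule R (D.BS ω ⟶ D.BS ψ) :=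
  Submodule.span R {f | ∃ (u : W) (_ : bruhatLT cs u x)
    (l₁ : CLeaf cs ω u) (l₂ : CLeaf cs ψ u), f = D.leafMor ω u l₁ ≫ D.adj ψ u l₂}


section Reduction

variable [Algebra ℝ R] (aug : R →ₐ[ℝ] ℝ)

/-- The ideal `R⁺` of the graded ring `R`, i.e. the kernel of the augmentation
`R → R/R⁺ ≅ ℝ`. -/
noncomputable def Rplus : Ideal R := RingHom.ker (aug : R →+* ℝ)

variable {Mo Mo' : Type*} [AddCommGroup Mo] [Module R Mo] [AddCommGroup Mo'] [Module R Mo']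

/-- The submodule `R⁺·M` of an `R`-module `M`. -/
noncomputable def redSub : Submodule R Mo := (Rplus aug) • (⊤ : Submodule R Mo)

/-- Reduction modulo `R⁺`: the quotient `M ⊗_R ℝ ≅ M/R⁺M`. -/
noncomputable def Red := Mo ⧸ (redSub aug : Submodule R Mo)

noncomputable instance : AddCommGroup (Red aug (Mo := Mo)) :=
  inferInstanceAs (AddCommGroup (Mo ⧸ (redSub aug : Submodule R Mo)))
noncomputable instance : Module R (Red aug (Mo := Mo)) :=
  inferInstanceAs (Module R (Mo ⧸ (redSub aug : Submodule R Mo)))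

/-- The canonical projection `M → M ⊗_R ℝ`. -/
noncomputable def redMk : Mo →ₗ[R] Red aug (Mo := Mo) := (redSub aug).mkQ

lemma redSub_stable (f : Mo →ₗ[R] Mo') :
    (redSub aug : Submodule R Mo) ≤ (redSub aug : Submodule R Mo').comap f := by
  rw [← Submodule.map_le_iff_le_comap]
  unfold redSub
  rw [Submodule.map_smul'']
  exact Submodule.smul_mono le_rfl le_top

/-- The map induced on reductions modulo `R⁺` by an `R`-linear map. -/
noncomputable def redMap (f : Mo →ₗ[R] Mo') :
    Red aug (Mo := Mo) →ₗ[R] Red aug (Mo := Mo') :=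
  Submodule.mapQ _ _ f (redSub_stable aug f)

end Reduction

/-!
STATEMENT 6: Let w̲ be a reduced expression for w ∈ W and x ≤ w.  Then the ℝ-linear map
f : Δ_{w̲}(x) → Hom^ℤ(BS(w̲), R_x) ⊗_R ℝ determined by l ↦ (β_x ∘ l) ⊗ 1 for
l ∈ L_{w̲}(x) is an isomorphism of graded right A-modules, where
A = End^ℤ(BS(w̲)) ⊗_R ℝ acts on Hom^ℤ(BS(w̲), R_x) ⊗_R ℝ by composition.

Here: the graded cell module Δ_{w̲}(x) is the ℝ-vector space `CLeaf cs ww x →₀ ℝ` with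
basis the light leaves L_{w̲}(x), graded by the degree of the leaves, and with the right
A-action `act` determined by the cellular structure constants: for a ∈ End^ℤ(BS(w̲)) and
a leaf l, if l ∘ a ≡ Σ_g g·r_g mod DL_{<x}, then l·(a ⊗ 1) = Σ_g (r_g mod R⁺)·g.  The
reduction `− ⊗_R ℝ` is realised as `Red : M ↦ M/R⁺M`, and A acts on the reduced Hom
space by (reduction of) precomposition.  "Isomorphism of graded right A-modules" =
bijective, A-equivariant, and degree-preserving for the given grading `grX` (for which
the standard leaf (β_x ∘ l) ⊗ 1 is homogeneous of degree deg l).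
-/


section Aux

lemma selectedWord_length_le : ∀ (l : List B) (e : List Bool),
    (selectedWord l e).length ≤ l.length
  | [], e => by cases e <;> simp [selectedWord]
  | s :: l, [] => by simp [selectedWord]
  | s :: l, true :: e => by
      simpa [selectedWord] using selectedWord_length_le l e
  | s :: l, false :: e => by
      simp only [selectedWord, List.length_cons]
      exact le_trans (selectedWord_length_le l e) (Nat.le_succ _)

lemma bruhatLT_length (cs : CoxeterSystem M W) {u x : W} (h : bruhatLT cs u x) :
    cs.length u < cs.length x := by
  induction h with
  | single h => exact h.2
  | tail _ h ih => exact ih.trans h.2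

lemma isEmpty_cleaf (cs : CoxeterSystem M W) {u x : W} (ω : List B)
    (hprod : cs.wordProd ω = u) (hr : cs.IsReduced ω) (h : bruhatLT cs u x) :
    IsEmpty (CLeaf cs ω x) := by
  constructor
  intro e
  have h1 : cs.length x ≤ (selectedWord ω (List.ofFn e.1)).length := by
    have he := e.2
    unfold subwordProd at he
    have h1' := cs.length_wordProd_le (selectedWord ω (List.ofFn e.1))
    rw [he] at h1'
    exact h1'
  have h2 := selectedWord_length_le ω (List.ofFn e.1)
  have h3 : cs.length u = ω.length := by rw [← hprod]; exact hr
  have h4 := bruhatLT_length cs h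
  omega

end Aux

theorem cell_module_iso_reduced_hom
    {B : Type*} {W : Type*} [Group W] [DecidableEq W] {M : CoxeterMatrix B}
    (cs : CoxeterSystem M W) [Algebra ℝ R] (aug : R →ₐ[ℝ] ℝ)
    (D : SoergelHomData cs R)
    (w : W) (ww : List B) (hw : cs.wordProd ww = w) (hred : cs.IsReduced ww)
    (x : W) (hxw : bruhatLE cs x w)
    -- the right action of A = End^ℤ(BS(w̲)) ⊗_R ℝ on the cell module Δ_{w̲}(x),
    -- determined by expanding l ∘ a in the double leaves basis modulo DL_{<x}:
    (act : (D.BS ww ⟶ D.BS ww) → (CLeaf cs ww x →₀ ℝ) →ₗ[ℝ] (CLeaf cs ww x →₀ ℝ))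
    (hact : ∀ (a : D.BS ww ⟶ D.BS ww) (l : CLeaf cs ww x),
      ∃ r : CLeaf cs ww x → R,
        ((a ≫ D.leafMor ww x l - ∑ g : CLeaf cs ww x, r g • D.leafMor ww x g)
            ∈ DLlt D ww (D.rho x) x) ∧
        act a (Finsupp.single l 1)
          = ∑ g : CLeaf cs ww x, aug (r g) • Finsupp.single g 1)
    -- the grading of Hom^ℤ(BS(w̲), R_x) ⊗_R ℝ, for which standard leaves are homogeneous:
    (grX : ℤ → Submodule R (Red aug (Mo := D.BS ww ⟶ D.Rstd x)))
    (hgrX : ∀ l : CLeaf cs ww x,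
      redMk aug (D.leafMor ww x l ≫ D.beta x) ∈ grX (leafDeg cs ww l))
    -- the map f, determined by l ↦ (β_x ∘ l) ⊗ 1 and ℝ-linearity:
    (f : (CLeaf cs ww x →₀ ℝ) → Red aug (Mo := D.BS ww ⟶ D.Rstd x))
    (hf : ∀ φ : CLeaf cs ww x →₀ ℝ,
      f φ = redMk aug (φ.sum fun l c => algebraMap ℝ R c • (D.leafMor ww x l ≫ D.beta x))) :
    Function.Bijective f ∧
    (∀ (a : D.BS ww ⟶ D.BS ww) (φ : CLeaf cs ww x →₀ ℝ),
      f (act a φ) = redMap aug (CategoryTheory.Linear.leftComp R (D.Rstd x) a) (f φ)) ∧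
    (∀ (k : ℤ) (φ : CLeaf cs ww x →₀ ℝ),
      φ ∈ Finsupp.supported ℝ ℝ {l : CLeaf cs ww x | leafDeg cs ww l = k} →
        f φ ∈ grX k) := by
  classical
  obtain ⟨bb, hbb⟩ := D.std_basis ww x
  have haug : ∀ c : ℝ, aug (algebraMap ℝ R c) = c := by
    intro c; simpa using aug.commutes c
  have hker : ∀ r : R, aug r = 0 → ∀ mm : D.BS ww ⟶ D.Rstd x,
      redMk aug (r • mm) = 0 := by
    intro r hr mm
    have hmem : r • mm ∈ (redSub aug : Submodule R (D.BS ww ⟶ D.Rstd x)) :=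
      Submodule.smul_mem_smul (by simpa [Rplus, RingHom.mem_ker] using hr)
        Submodule.mem_top
    exact (Submodule.Quotient.mk_eq_zero _).mpr hmem
  have hf0 : f 0 = 0 := by
    rw [hf]; rw [Finsupp.sum_zero_index]; simp
  have hfadd : ∀ φ ψ, f (φ + ψ) = f φ + f ψ := by
    intro φ ψ
    rw [hf, hf, hf,
      Finsupp.sum_add_index' (fun l => by simp) (fun l c c' => by rw [map_add, add_smul]),
      map_add]
  have hfsmul : ∀ (c : ℝ) (φ), f (c • φ) = algebraMap ℝ R c • f φ := by
    intro c φ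
    rw [hf, hf, Finsupp.sum_smul_index (fun l => by simp), ← LinearMap.map_smul,
      Finsupp.smul_sum]
    congr 1
    refine Finsupp.sum_congr fun l _ => ?_
    rw [map_mul, mul_smul]
  let fA : (CLeaf cs ww x →₀ ℝ) →+ Red aug (Mo := D.BS ww ⟶ D.Rstd x) :=
    { toFun := f, map_zero' := hf0, map_add' := hfadd }
  have hsingle : ∀ l, f (Finsupp.single l 1)
      = redMk aug (D.leafMor ww x l ≫ D.beta x) := by
    intro l
    rw [hf, Finsupp.sum_single_index (by simp)]
    simp
  -- Hom(BS(ρu), R_x) = 0 for u < x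
  have hHomZero : ∀ u : W, bruhatLT cs u x → ∀ h : D.BS (D.rho u) ⟶ D.Rstd x, h = 0 := by
    intro u hu h
    obtain ⟨b', -⟩ := D.std_basis (D.rho u) x
    haveI : IsEmpty (CLeaf cs (D.rho u) x) :=
      isEmpty_cleaf cs (D.rho u) (D.rho_prod u) (D.rho_reduced u) hu
    have hz : b'.repr h = 0 := Finsupp.ext fun a => isEmptyElim a
    calc h = b'.repr.symm (b'.repr h) := (b'.repr.symm_apply_apply h).symm
      _ = 0 := by rw [hz, map_zero]
  have hDL : ∀ d ∈ DLlt D ww (D.rho x) x, d ≫ D.beta x = 0 := by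
    intro d hd
    have key : (CategoryTheory.Linear.rightComp R (D.BS ww) (D.beta x)) d = 0 := by
      refine Submodule.span_induction ?_ ?_ ?_ ?_ hd
      · rintro g ⟨u, hu, l₁, l₂, rfl⟩
        simp only [CategoryTheory.Linear.rightComp_apply, Category.assoc]
        rw [hHomZero u hu (D.adj (D.rho x) u l₂ ≫ D.beta x)]
        simp
      · simp
      · intro p q _ _ hp hq; rw [map_add, hp, hq, add_zero]
      · intro r p _ hp; rw [map_smul, hp, smul_zero]
    simpa using key
  -- the key computation on basis vectors
  have hkey : ∀ (a : D.BS ww ⟶ D.BS ww) (l : CLeaf cs ww x),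
      f (act a (Finsupp.single l 1))
        = redMk aug (a ≫ (D.leafMor ww x l ≫ D.beta x)) := by
    intro a l
    obtain ⟨r, hd, heq⟩ := hact a l
    have h2 := hDL _ hd
    rw [Preadditive.sub_comp, Preadditive.sum_comp, sub_eq_zero] at h2
    have h1 : a ≫ (D.leafMor ww x l ≫ D.beta x)
        = ∑ g : CLeaf cs ww x, r g • (D.leafMor ww x g ≫ D.beta x) := by
      rw [← Category.assoc, h2]
      exact Finset.sum_congr rfl fun g _ => by
        rw [CategoryTheory.Linear.smul_comp]
    rw [heq]
    calc f (∑ g : CLeaf cs ww x, aug (r g) • Finsupp.single g (1 : ℝ))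
        = ∑ g : CLeaf cs ww x, f (aug (r g) • Finsupp.single g (1 : ℝ)) :=
          map_sum fA _ _
      _ = ∑ g : CLeaf cs ww x,
            redMk aug (r g • (D.leafMor ww x g ≫ D.beta x)) := by
          refine Finset.sum_congr rfl fun g _ => ?_
          rw [hfsmul, hsingle, ← LinearMap.map_smul, ← sub_eq_zero, ← map_sub, ← sub_smul]
          exact hker _ (by rw [map_sub, haug, sub_self]) _
      _ = redMk aug
            (∑ g : CLeaf cs ww x, r g • (D.leafMor ww x g ≫ D.beta x)) :=
          (map_sum (redMk aug) _ _).symm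
      _ = redMk aug (a ≫ (D.leafMor ww x l ≫ D.beta x)) := by rw [← h1]
  -- equivariance
  have hredmk : ∀ (a : D.BS ww ⟶ D.BS ww) (mm : D.BS ww ⟶ D.Rstd x),
      redMap aug (CategoryTheory.Linear.leftComp R (D.Rstd x) a) (redMk aug mm)
        = redMk aug (a ≫ mm) := by
    intro a mm
    exact Submodule.mapQ_apply (p := redSub aug) (q := redSub aug)
      (CategoryTheory.Linear.leftComp R (D.Rstd x) a) mm
  have hequiv : ∀ (a : D.BS ww ⟶ D.BS ww) (φ : CLeaf cs ww x →₀ ℝ),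
      f (act a φ)
        = redMap aug (CategoryTheory.Linear.leftComp R (D.Rstd x) a) (f φ) := by
    intro a φ
    have hφ : act a φ = ∑ l ∈ φ.support, φ l • act a (Finsupp.single l 1) := by
      conv_lhs => rw [← Finsupp.sum_single φ]
      rw [Finsupp.sum, map_sum]
      refine Finset.sum_congr rfl fun l _ => ?_
      rw [← (act a).map_smul, Finsupp.smul_single, smul_eq_mul, mul_one]
    rw [hφ]
    rw [show f (∑ l ∈ φ.support, φ l • act a (Finsupp.single l 1))
        = ∑ l ∈ φ.support, f (φ l • act a (Finsupp.single l 1)) from map_sum fA _ _]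
    have hstep : (∑ l ∈ φ.support, f (φ l • act a (Finsupp.single l 1)))
        = ∑ l ∈ φ.support, algebraMap ℝ R (φ l) •
            redMk aug (a ≫ (D.leafMor ww x l ≫ D.beta x)) :=
      Finset.sum_congr rfl fun l _ => by rw [hfsmul, hkey]
    rw [hstep, hf, Finsupp.sum, map_sum (redMk aug), map_sum]
    refine Finset.sum_congr rfl fun l _ => ?_
    rw [LinearMap.map_smul (redMk aug), LinearMap.map_smul, hredmk]
  -- injectivity
  have hrepr0 : ∀ mm ∈ (redSub aug : Submodule R (D.BS ww ⟶ D.Rstd x)),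
      ∀ l, aug (bb.repr mm l) = 0 := by
    intro mm hmm
    refine Submodule.smul_induction_on hmm ?_ ?_
    · intro r hr n _ l
      rw [map_smul, Finsupp.smul_apply, smul_eq_mul, map_mul,
        show aug r = 0 by simpa [Rplus, RingHom.mem_ker] using hr, zero_mul]
    · intro p q hp hq l
      rw [map_add, Finsupp.add_apply, map_add, hp l, hq l, add_zero]
  have hinj0 : ∀ χ : CLeaf cs ww x →₀ ℝ, f χ = 0 → χ = 0 := by
    intro χ hχ
    rw [hf] at hχ
    have hmem : (χ.sum fun l c => algebraMap ℝ R c • (D.leafMor ww x l ≫ D.beta x))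
        ∈ (redSub aug : Submodule R (D.BS ww ⟶ D.Rstd x)) :=
      (Submodule.Quotient.mk_eq_zero _).mp hχ
    ext l₀
    have h1 : bb.repr (χ.sum fun l c =>
        algebraMap ℝ R c • (D.leafMor ww x l ≫ D.beta x)) l₀
        = algebraMap ℝ R (χ l₀) := by
      rw [Finsupp.sum, map_sum, Finsupp.finset_sum_apply]
      rw [Finset.sum_eq_single l₀
        (fun l _ hne => by
          rw [map_smul, ← hbb, bb.repr_self, Finsupp.smul_apply,
            Finsupp.single_eq_of_ne hne.symm, smul_zero])
        (fun hns => by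
          rw [Finsupp.notMem_support_iff.mp hns, map_zero, zero_smul,
            map_zero, Finsupp.zero_apply])]
      rw [map_smul, ← hbb, bb.repr_self, Finsupp.smul_apply,
        Finsupp.single_eq_same, smul_eq_mul, mul_one]
    have h2 := hrepr0 _ hmem l₀
    rw [h1, haug] at h2
    simpa using h2
  have hinj : Function.Injective f := by
    intro φ ψ h
    have h3 : f (φ - ψ) = 0 := by
      have h4 := map_sub fA φ ψ
      rw [show fA (φ - ψ) = f (φ - ψ) from rfl, show fA φ = f φ from rfl,
        show fA ψ = f ψ from rfl] at h4
      rw [h4, h, sub_self]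
    exact sub_eq_zero.mp (hinj0 _ h3)
  -- surjectivity
  have hsurj : Function.Surjective f := by
    intro y
    obtain ⟨mm, hmm⟩ := Submodule.mkQ_surjective (redSub aug) y
    refine ⟨Finsupp.mapRange (⇑aug) (map_zero aug) (bb.repr mm), ?_⟩
    rw [hf, Finsupp.sum_mapRange_index (fun l => by simp)]
    rw [← hmm, show (redSub aug).mkQ mm = redMk aug mm from rfl]
    set c := bb.repr mm with hc
    have hmm2 : mm = c.sum fun l r => r • (D.leafMor ww x l ≫ D.beta x) := by
      conv_lhs => rw [← bb.linearCombination_repr mm]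
      rw [Finsupp.linearCombination_apply, ← hc]
      exact Finsupp.sum_congr fun l _ => by rw [hbb]
    rw [← sub_eq_zero, ← map_sub]
    have hmem : (c.sum fun l r =>
        algebraMap ℝ R (aug r) • (D.leafMor ww x l ≫ D.beta x)) - mm
        ∈ (redSub aug : Submodule R (D.BS ww ⟶ D.Rstd x)) := by
      rw [hmm2, Finsupp.sum, Finsupp.sum, ← Finset.sum_sub_distrib]
      refine Submodule.sum_mem _ fun l _ => ?_
      rw [← sub_smul]
      exact Submodule.smul_mem_smul
        (by simp [Rplus, RingHom.mem_ker, map_sub, haug]) Submodule.mem_top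
    exact (Submodule.Quotient.mk_eq_zero _).mpr hmem
  refine ⟨⟨hinj, hsurj⟩, hequiv, ?_⟩
  -- grading
  intro k φ hsupp
  rw [hf, Finsupp.sum, map_sum (redMk aug)]
  refine Submodule.sum_mem _ fun l hl => ?_
  rw [LinearMap.map_smul (redMk aug)]
  refine Submodule.smul_mem _ _ ?_
  have hdeg : leafDeg cs ww l = k := hsupp hl
  rw [← hdeg]
  exact hgrX l
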